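/- Let S be a finite set of size s ≥ 1, let Q be a finite nonempty set, let P : Q → (finite subsets of S) be a function, and let t̄ ≥ 0 be a real number with (1/|Q|)·Σ_{q∈Q} |P(q)| ≤ t̄. Let c be an integer with ⌊2t̄⌋ ≤ c ≤ s. Then there exist a subset C ⊆ S with |C| = c and a subset Q' ⊆ Q with P(q) ⊆ C for every q ∈ Q' and |Q'| ≥ (|Q|/2) · ((c − ⌊2t̄⌋ + 1)/s)^⌊2t̄⌋ (as real numbers). -/

import Mathlib

open Finset in
/-- Counting supersets: the number of `c`-subsets of `S` containing `T` equals
`(|S| - |T|).choose (c - |T|)`, provided `|T| ≤ c`. -/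
private lemma countSup {α : Type*} [DecidableEq α] (S T : Finset α) (hTS : T ⊆ S) (c : ℕ)
    (hc : T.card ≤ c) :
    ((S.powersetCard c).filter (fun C => T ⊆ C)).card
      = (S.card - T.card).choose (c - T.card) := by
  rw [← Finset.card_sdiff_of_subset hTS, ← Finset.card_powersetCard]
  apply Finset.card_bij' (fun C _ => C \ T) (fun D _ => D ∪ T)
  · intro C hC
    simp only [Finset.mem_filter, Finset.mem_powersetCard] at hC ⊢
    obtain ⟨⟨hCS, hCc⟩, hTC⟩ := hC
    refine ⟨Finset.sdiff_subset_sdiff hCS le_rfl, ?_⟩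
    rw [Finset.card_sdiff_of_subset hTC, hCc]
  · intro D hD
    simp only [Finset.mem_filter, Finset.mem_powersetCard, Finset.subset_sdiff] at hD ⊢
    obtain ⟨⟨hDS, hdisj⟩, hDc⟩ := hD
    refine ⟨⟨Finset.union_subset hDS hTS, ?_⟩, Finset.subset_union_right⟩
    rw [Finset.card_union_of_disjoint hdisj, hDc, Nat.sub_add_cancel hc]
  · intro C hC
    simp only [Finset.mem_filter] at hC
    exact Finset.sdiff_union_of_subset hC.2
  · intro D hD
    simp only [Finset.mem_powersetCard, Finset.subset_sdiff] at hD
    rw [Finset.union_sdiff_right, Finset.sdiff_eq_self_iff_disjoint.2 hD.1.2]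

private lemma chooseRatio (s c t : ℕ) (ht : t ≤ c) (hcs : c ≤ s) :
    ∀ k, k ≤ t →
      (((c : ℝ) - t + 1) / s) ^ k * (s.choose c : ℝ) ≤ ((s - k).choose (c - k) : ℝ) := by
  intro k
  induction k with
  | zero => simp
  | succ k ih =>
    intro hk1
    have hk : k ≤ t := by omega
    have hks : k + 1 ≤ s := by omega
    have hkc : k + 1 ≤ c := by omega
    have hsk : (0:ℝ) < (s:ℝ) - k := by
      have : (k:ℝ) < s := by exact_mod_cast (by omega : k < s)
      linarith
    have hs0 : (0:ℝ) < (s:ℝ) := by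
      have : (0:ℕ) < s := by omega
      exact_mod_cast this
    -- Pascal-type identity
    have h1 : s - (k+1) + 1 = s - k := by omega
    have h2 : c - (k+1) + 1 = c - k := by omega
    have hid := Nat.add_one_mul_choose_eq (s - (k+1)) (c - (k+1))
    rw [h1, h2] at hid
    -- hid : (s - k) * choose (s-(k+1)) (c-(k+1)) = choose (s-k) (c-k) * (c-k)
    have hidR : ((s:ℝ) - k) * (((s-(k+1)).choose (c-(k+1)) : ℕ) : ℝ)
        = ((s-k).choose (c-k) : ℝ) * ((c:ℝ) - k) := by
      have := congrArg (fun n : ℕ => (n : ℝ)) hid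
      push_cast [Nat.cast_sub (by omega : k ≤ s), Nat.cast_sub (by omega : k ≤ c)] at this
      linarith [this]
    set r : ℝ := ((c : ℝ) - t + 1) / s with hr
    have hr0 : 0 ≤ r := by
      apply div_nonneg _ hs0.le
      have : (t:ℝ) ≤ c := by exact_mod_cast ht
      linarith
    have hA0 : (0:ℝ) ≤ ((s-k).choose (c-k) : ℝ) := by positivity
    have hratio : r ≤ ((c:ℝ) - k) / ((s:ℝ) - k) := by
      rw [hr, div_le_div_iff₀ hs0 hsk]
      have hck : (k:ℝ) + 1 ≤ (t:ℝ) := by exact_mod_cast hk1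
      have htc : (t:ℝ) ≤ (c:ℝ) := by exact_mod_cast ht
      have hk0 : (0:ℝ) ≤ (k:ℝ) := by positivity
      nlinarith
    have hstep : ((s-(k+1)).choose (c-(k+1)) : ℝ)
        = ((c:ℝ) - k) / ((s:ℝ) - k) * ((s-k).choose (c-k) : ℝ) := by
      field_simp
      linarith [hidR]
    calc r ^ (k+1) * (s.choose c : ℝ) = r * (r ^ k * (s.choose c : ℝ)) := by ring
      _ ≤ r * ((s-k).choose (c-k) : ℝ) := by
          apply mul_le_mul_of_nonneg_left (ih hk) hr0
      _ ≤ ((c:ℝ) - k) / ((s:ℝ) - k) * ((s-k).choose (c-k) : ℝ) := by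
          apply mul_le_mul_of_nonneg_right hratio hA0
      _ = ((s-(k+1)).choose (c-(k+1)) : ℝ) := hstep.symm

theorem stmt6 {α β : Type*} [DecidableEq α] (S : Finset α) (Q : Finset β)
    (s : ℕ) (hS : S.card = s) (hs : 1 ≤ s) (hQ : Q.Nonempty)
    (P : β → Finset α) (hPS : ∀ q ∈ Q, P q ⊆ S)
    (tbar : ℝ) (htbar : 0 ≤ tbar)
    (havg : (1 / (Q.card : ℝ)) * ∑ q ∈ Q, ((P q).card : ℝ) ≤ tbar)
    (c : ℕ) (hc1 : ⌊2 * tbar⌋₊ ≤ c) (hc2 : c ≤ s) :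
    ∃ C ⊆ S, C.card = c ∧
      ∃ Q' ⊆ Q, (∀ q ∈ Q', P q ⊆ C) ∧
        ((Q.card : ℝ) / 2) * (((c : ℝ) - (⌊2 * tbar⌋₊ : ℝ) + 1) / (s : ℝ)) ^ (⌊2 * tbar⌋₊) ≤
          (Q'.card : ℝ) := by
  classical
  set t : ℕ := ⌊2 * tbar⌋₊ with hts
  set r : ℝ := (((c : ℝ) - t + 1) / s) with hrdef
  have hs0 : (0:ℝ) < (s:ℝ) := by exact_mod_cast hs
  have hr0 : 0 ≤ r := by
    apply div_nonneg _ hs0.le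
    have : (t:ℝ) ≤ c := by exact_mod_cast hc1
    linarith
  -- Markov step
  set Q0 : Finset β := Q.filter (fun q => (P q).card ≤ t) with hQ0def
  have hQ0sub : Q0 ⊆ Q := Finset.filter_subset _ _
  have hQc : (0:ℝ) < (Q.card : ℝ) := by exact_mod_cast Finset.card_pos.2 hQ
  have hMarkov : (Q.card : ℝ) / 2 ≤ (Q0.card : ℝ) := by
    set Q1 : Finset β := Q.filter (fun q => ¬ (P q).card ≤ t) with hQ1def
    have hsplit : Q0.card + Q1.card = Q.card := Finset.card_filter_add_card_filter_not _
    have hsum1 : (Q1.card : ℝ) * ((t:ℝ) + 1) ≤ ∑ q ∈ Q, ((P q).card : ℝ) := by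
      calc (Q1.card : ℝ) * ((t:ℝ) + 1) = ∑ _q ∈ Q1, ((t:ℝ) + 1) := by
            rw [Finset.sum_const, nsmul_eq_mul]
        _ ≤ ∑ q ∈ Q1, ((P q).card : ℝ) := by
            apply Finset.sum_le_sum
            intro q hq
            have : t < (P q).card := by
              have := (Finset.mem_filter.1 hq).2
              omega
            have : (t:ℝ) + 1 ≤ ((P q).card : ℝ) := by exact_mod_cast this
            linarith
        _ ≤ ∑ q ∈ Q, ((P q).card : ℝ) := by
            apply Finset.sum_le_sum_of_subset_of_nonneg (Finset.filter_subset _ _)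
            intro q _ _; positivity
    have hsum2 : ∑ q ∈ Q, ((P q).card : ℝ) ≤ tbar * Q.card := by
      rw [one_div] at havg
      have h := mul_le_mul_of_nonneg_left havg hQc.le
      rw [← mul_assoc, mul_inv_cancel₀ hQc.ne', one_mul] at h
      linarith
    have hfl : 2 * tbar < (t:ℝ) + 1 := Nat.lt_floor_add_one (2 * tbar)
    have key : (Q1.card : ℝ) * ((t:ℝ) + 1) ≤ ((t:ℝ) + 1) / 2 * Q.card := by
      have h2 : tbar * Q.card ≤ ((t:ℝ) + 1) / 2 * Q.card := by nlinarith
      linarith [hsum1.trans hsum2]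
    have ht1 : (0:ℝ) < (t:ℝ) + 1 := by positivity
    have hQ1le : (Q1.card : ℝ) ≤ (Q.card : ℝ) / 2 := by
      have := le_of_mul_le_mul_right (by linarith [key] : (Q1.card : ℝ) * ((t:ℝ)+1) ≤ ((Q.card : ℝ)/2) * ((t:ℝ)+1)) ht1
      exact this
    have : (Q0.card : ℝ) + (Q1.card : ℝ) = (Q.card : ℝ) := by exact_mod_cast hsplit
    linarith
  -- counting over all c-subsets
  have hne : (S.powersetCard c).Nonempty := by
    rw [Finset.powersetCard_nonempty]
    omega
  have hN : (S.powersetCard c).card = s.choose c := by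
    rw [Finset.card_powersetCard, hS]
  have hdouble : ∑ C ∈ S.powersetCard c, (Q0.filter (fun q => P q ⊆ C)).card
      = ∑ q ∈ Q0, ((S.powersetCard c).filter (fun C => P q ⊆ C)).card := by
    simp_rw [Finset.card_filter]
    exact Finset.sum_comm
  have hterm : ∀ q ∈ Q0,
      r ^ t * (s.choose c : ℝ) ≤ (((S.powersetCard c).filter (fun C => P q ⊆ C)).card : ℝ) := by
    intro q hq
    have hqQ : q ∈ Q := hQ0sub hq
    have hk : (P q).card ≤ t := (Finset.mem_filter.1 hq).2
    rw [countSup S (P q) (hPS q hqQ) c (hk.trans hc1), hS]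
    have hpow : r ^ t ≤ r ^ (P q).card := by
      rcases Nat.eq_zero_or_pos t with h0 | hpos
      · have : (P q).card = 0 := by omega
        rw [this, h0]
      · apply pow_le_pow_of_le_one hr0 _ hk
        rw [hrdef, div_le_one hs0]
        have h1 : (1:ℝ) ≤ (t:ℝ) := by exact_mod_cast hpos
        have h2 : (c:ℝ) ≤ (s:ℝ) := by exact_mod_cast hc2
        linarith
    calc r ^ t * (s.choose c : ℝ) ≤ r ^ (P q).card * (s.choose c : ℝ) := by
          apply mul_le_mul_of_nonneg_right hpow (by positivity)
      _ ≤ ((s - (P q).card).choose (c - (P q).card) : ℝ) :=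
          chooseRatio s c t hc1 hc2 (P q).card hk
  -- averaging
  have htotal : ((S.powersetCard c).card : ℝ) * ((Q.card : ℝ) / 2 * r ^ t)
      ≤ ∑ C ∈ S.powersetCard c, ((Q0.filter (fun q => P q ⊆ C)).card : ℝ) := by
    have e1 : ∑ C ∈ S.powersetCard c, ((Q0.filter (fun q => P q ⊆ C)).card : ℝ)
        = ∑ q ∈ Q0, (((S.powersetCard c).filter (fun C => P q ⊆ C)).card : ℝ) := by
      exact_mod_cast congrArg (fun n : ℕ => (n:ℝ)) hdouble
    rw [e1]
    have e2 : (Q0.card : ℝ) * (r ^ t * (s.choose c : ℝ))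
        ≤ ∑ q ∈ Q0, (((S.powersetCard c).filter (fun C => P q ⊆ C)).card : ℝ) := by
      calc (Q0.card : ℝ) * (r ^ t * (s.choose c : ℝ))
          = ∑ _q ∈ Q0, (r ^ t * (s.choose c : ℝ)) := by rw [Finset.sum_const, nsmul_eq_mul]
        _ ≤ _ := Finset.sum_le_sum hterm
    have hch0 : (0:ℝ) ≤ r ^ t * (s.choose c : ℝ) := by positivity
    have e3 : ((S.powersetCard c).card : ℝ) * ((Q.card : ℝ) / 2 * r ^ t)
        ≤ (Q0.card : ℝ) * (r ^ t * (s.choose c : ℝ)) := by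
      rw [hN]
      nlinarith [hMarkov, hch0]
    linarith
  obtain ⟨C, hC, hbound⟩ := Finset.exists_le_of_sum_le hne
    (by
      rw [Finset.sum_const, nsmul_eq_mul]
      exact htotal :
      ∑ _C ∈ S.powersetCard c, ((Q.card : ℝ) / 2 * r ^ t)
        ≤ ∑ C ∈ S.powersetCard c, ((Q0.filter (fun q => P q ⊆ C)).card : ℝ))
  rw [Finset.mem_powersetCard] at hC
  refine ⟨C, hC.1, hC.2, Q0.filter (fun q => P q ⊆ C),
    (Finset.filter_subset _ _).trans hQ0sub, ?_, ?_⟩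
  · intro q hq
    exact (Finset.mem_filter.1 hq).2
  · exact hbound
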